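/- Let ψ: ℝ_+ → ℝ_+ be non-increasing with tψ(t) < 1 for large t, and Ψ(t) = tψ(t)/(1 − tψ(t)). If x ∈ [0,1) is irrational and a_{n+1}(x) a_n(x) ≤ Ψ(q_n(x))/4 for all sufficiently large n, then x is ψ-Dirichlet improvable. -/

import Mathlib

set_option maxHeartbeats 1000000

/-- The Gauss map `T(0) = 0`, `T(x) = 1/x (mod 1)`. -/
noncomputable def gaussT (x : ℝ) : ℝ := if x = 0 then 0 else Int.fract x⁻¹

/-- The `n`-th continued fraction partial quotient of `x`, `aₙ(x) = ⌊1/T^(n-1)(x)⌋` (for `n ≥ 1`). -/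
noncomputable def cfA (x : ℝ) (n : ℕ) : ℤ := ⌊(gaussT^[n - 1] x)⁻¹⌋

/-- The numerators `pₙ` of the continued fraction convergents of `x`. -/
noncomputable def cfP (x : ℝ) : ℕ → ℤ
  | 0 => 0
  | 1 => 1
  | n + 2 => cfA x (n + 2) * cfP x (n + 1) + cfP x n

/-- The denominators `qₙ` of the continued fraction convergents of `x`. -/
noncomputable def cfQ (x : ℝ) : ℕ → ℤ
  | 0 => 1
  | 1 => cfA x 1
  | n + 2 => cfA x (n + 2) * cfQ x (n + 1) + cfQ x n

/-- `x` is `ψ`-Dirichlet improvable: there exists `N` such that for all `t > N`,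
the system `|qx − p| < ψ(t)`, `|q| < t` has a nontrivial integer solution. -/
def DirichletImprovable (ψ : ℝ → ℝ) (x : ℝ) : Prop :=
  ∃ N : ℝ, ∀ t > N, ∃ p q : ℤ, ¬(p = 0 ∧ q = 0) ∧ |(q : ℝ) * x - (p : ℝ)| < ψ t ∧ |(q : ℝ)| < t

section Aux

variable {x : ℝ}

lemma iter_prop (hirr : Irrational x) (hx : x ∈ Set.Ioo (0:ℝ) 1) :
    ∀ k, Irrational (gaussT^[k] x) ∧ gaussT^[k] x ∈ Set.Ioo (0:ℝ) 1 := by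
  intro k
  induction k with
  | zero => exact ⟨hirr, hx⟩
  | succ k ih =>
    obtain ⟨hi, h0, h1⟩ := ih
    set y := gaussT^[k] x with hy
    have hy0 : y ≠ 0 := ne_of_gt h0
    have hstep : gaussT^[k+1] x = Int.fract y⁻¹ := by
      rw [Function.iterate_succ_apply', ← hy, gaussT, if_neg hy0]
    have hinv : Irrational y⁻¹ := irrational_inv_iff.mpr hi
    have hfr : Irrational (Int.fract y⁻¹) := by
      rw [Int.fract]; exact hinv.sub_intCast _
    rw [hstep]
    exact ⟨hfr, lt_of_le_of_ne (Int.fract_nonneg _) (Ne.symm hfr.ne_zero),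
      Int.fract_lt_one _⟩

lemma cfA_eq (k : ℕ) : cfA x (k+1) = ⌊(gaussT^[k] x)⁻¹⌋ := rfl

lemma cfA_ge_one (hirr : Irrational x) (hx : x ∈ Set.Ioo (0:ℝ) 1) (k : ℕ) :
    1 ≤ cfA x (k+1) := by
  obtain ⟨hi, h0, h1⟩ := iter_prop hirr hx k
  rw [cfA_eq]
  exact Int.le_floor.mpr (by push_cast; exact (one_le_inv₀ h0).mpr h1.le)

lemma iter_succ_eq (hirr : Irrational x) (hx : x ∈ Set.Ioo (0:ℝ) 1) (k : ℕ) :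
    gaussT^[k+1] x = (gaussT^[k] x)⁻¹ - cfA x (k+1) := by
  obtain ⟨hi, h0, h1⟩ := iter_prop hirr hx k
  rw [Function.iterate_succ_apply', gaussT, if_neg (ne_of_gt h0), Int.fract, cfA_eq]

lemma cfQ_pos_mono (hirr : Irrational x) (hx : x ∈ Set.Ioo (0:ℝ) 1) :
    ∀ n, 1 ≤ cfQ x n ∧ cfQ x n ≤ cfQ x (n+1) := by
  intro n
  induction n with
  | zero =>
    refine ⟨le_refl 1, ?_⟩
    show (1:ℤ) ≤ cfQ x 1
    exact cfA_ge_one hirr hx 0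
  | succ n ih =>
    obtain ⟨h1, h2⟩ := ih
    have h1' : 1 ≤ cfQ x (n+1) := le_trans h1 h2
    refine ⟨h1', ?_⟩
    show cfQ x (n+1) ≤ cfA x (n+2) * cfQ x (n+1) + cfQ x n
    have ha : 1 ≤ cfA x (n+2) := cfA_ge_one hirr hx (n+1)
    nlinarith

lemma cfQ_ge (hirr : Irrational x) (hx : x ∈ Set.Ioo (0:ℝ) 1) :
    ∀ n : ℕ, (n : ℤ) ≤ cfQ x n := by
  have key : ∀ n : ℕ, (n : ℤ) ≤ cfQ x n ∧ ((n:ℤ)+1) ≤ cfQ x (n+1) := by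
    intro n
    induction n with
    | zero => exact ⟨by norm_num [cfQ], by simpa [cfQ] using cfA_ge_one hirr hx 0⟩
    | succ n ih =>
      obtain ⟨h1, h2⟩ := ih
      refine ⟨by exact_mod_cast h2, ?_⟩
      have hq : 1 ≤ cfQ x n := (cfQ_pos_mono hirr hx n).1
      have ha : 1 ≤ cfA x (n+2) := cfA_ge_one hirr hx (n+1)
      have hq1 : 1 ≤ cfQ x (n+1) := (cfQ_pos_mono hirr hx (n+1)).1
      have : cfQ x (n+2) = cfA x (n+2) * cfQ x (n+1) + cfQ x n := rfl
      push_cast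
      rw [this]
      push_cast
      nlinarith
  exact fun n => (key n).1

lemma cfQ_le_mul (hirr : Irrational x) (hx : x ∈ Set.Ioo (0:ℝ) 1) (n : ℕ) :
    cfQ x (n+1) ≤ (cfA x (n+1) + 1) * cfQ x n := by
  cases n with
  | zero =>
    show cfA x 1 ≤ (cfA x 1 + 1) * 1
    omega
  | succ m =>
    have h1 : cfQ x m ≤ cfQ x (m+1) := (cfQ_pos_mono hirr hx m).2
    show cfA x (m+2) * cfQ x (m+1) + cfQ x m ≤ (cfA x (m+2) + 1) * cfQ x (m+1)
    nlinarith

lemma cf_det : ∀ n : ℕ, cfP x (n+1) * cfQ x n - cfP x n * cfQ x (n+1) = (-1)^n := by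
  intro n
  induction n with
  | zero => simp [cfP, cfQ]
  | succ n ih =>
    have hp : cfP x (n+2) = cfA x (n+2) * cfP x (n+1) + cfP x n := rfl
    have hq : cfQ x (n+2) = cfA x (n+2) * cfQ x (n+1) + cfQ x n := rfl
    rw [hp, hq, pow_succ]
    ring_nf
    ring_nf at ih
    linarith

lemma beta_eq (hirr : Irrational x) (hx : x ∈ Set.Ioo (0:ℝ) 1) :
    ∀ n, (cfQ x n : ℝ) * x - (cfP x n : ℝ) =
      (-1)^n * ∏ k ∈ Finset.range (n+1), gaussT^[k] x := by
  have key : ∀ n, ((cfQ x n : ℝ) * x - (cfP x n : ℝ) =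
      (-1)^n * ∏ k ∈ Finset.range (n+1), gaussT^[k] x) ∧
      ((cfQ x (n+1) : ℝ) * x - (cfP x (n+1) : ℝ) =
      (-1)^(n+1) * ∏ k ∈ Finset.range (n+2), gaussT^[k] x) := by
    intro n
    induction n with
    | zero =>
      constructor
      · simp [cfP, cfQ]
      · have h1 : gaussT^[1] x = x⁻¹ - cfA x 1 := iter_succ_eq hirr hx 0
        have hx0 : x ≠ 0 := hirr.ne_zero
        have hq1 : cfQ x (0+1) = cfA x 1 := rfl
        have hp1 : cfP x (0+1) = 1 := rfl
        rw [hq1, hp1, Finset.prod_range_succ, Finset.prod_range_one, h1]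
        simp only [Function.iterate_zero_apply]
        push_cast
        field_simp
        ring
    | succ n ih =>
      obtain ⟨h1, h2⟩ := ih
      refine ⟨h2, ?_⟩
      have hp : cfP x (n+2) = cfA x (n+2) * cfP x (n+1) + cfP x n := rfl
      have hq : cfQ x (n+2) = cfA x (n+2) * cfQ x (n+1) + cfQ x n := rfl
      have hxx : gaussT^[n+2] x = (gaussT^[n+1] x)⁻¹ - cfA x (n+2) :=
        iter_succ_eq hirr hx (n+1)
      have hne : gaussT^[n+1] x ≠ 0 := ne_of_gt (iter_prop hirr hx (n+1)).2.1
      have hmul : gaussT^[n+1] x * gaussT^[n+2] x = 1 - (cfA x (n+2) : ℝ) * gaussT^[n+1] x := by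
        rw [hxx, mul_sub, mul_inv_cancel₀ hne]; ring
      rw [hq, hp]
      push_cast
      rw [Finset.prod_range_succ (n := n+2), Finset.prod_range_succ (n := n+1)]
      rw [Finset.prod_range_succ (n := n+1)] at h2
      set P := ∏ k ∈ Finset.range (n+1), gaussT^[k] x
      set X1 := gaussT^[n+1] x
      set X2 := gaussT^[n+2] x
      have : X1 * X2 = 1 - (cfA x (n+2) : ℝ) * X1 := hmul
      calc ((cfA x (n+2):ℝ) * (cfQ x (n+1):ℝ) + (cfQ x n:ℝ)) * x -
            ((cfA x (n+2):ℝ) * (cfP x (n+1):ℝ) + (cfP x n:ℝ))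
          = (cfA x (n+2):ℝ) * ((cfQ x (n+1):ℝ) * x - (cfP x (n+1):ℝ)) +
            ((cfQ x n:ℝ) * x - (cfP x n:ℝ)) := by ring
        _ = (cfA x (n+2):ℝ) * ((-1)^(n+1) * (P * X1)) + (-1)^n * P := by rw [h2, h1]
        _ = (-1)^(n+2) * (P * X1 * X2) := by
            rw [show P * X1 * X2 = P * (X1 * X2) by ring, this]; ring
  exact fun n => (key n).1

end Aux

/-- Kleinbock–Wadleigh criterion (improvable direction). -/
theorem dirichlet_improvable (ψ : ℝ → ℝ) (hψpos : ∀ t > (0 : ℝ), 0 < ψ t)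
    (hψmono : ∀ s t : ℝ, 0 < s → s ≤ t → ψ t ≤ ψ s)
    (hsmall : ∃ T : ℝ, ∀ t ≥ T, t * ψ t < 1)
    (x : ℝ) (hx : x ∈ Set.Ico (0 : ℝ) 1) (hirr : Irrational x)
    (h : ∃ N : ℕ, ∀ n ≥ N, 1 ≤ n →
        ((cfA x (n + 1) * cfA x n : ℤ) : ℝ) ≤
          (cfQ x n : ℝ) * ψ (cfQ x n) / (1 - (cfQ x n : ℝ) * ψ (cfQ x n)) / 4) :
    DirichletImprovable ψ x := by
  obtain ⟨T, hT⟩ := hsmall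
  obtain ⟨N₀, hN₀⟩ := h
  have hx' : x ∈ Set.Ioo (0:ℝ) 1 := ⟨lt_of_le_of_ne hx.1 (Ne.symm hirr.ne_zero), hx.2⟩
  refine ⟨max (max T 2) ((cfQ x (N₀+1) : ℤ) : ℝ), fun t ht => ?_⟩
  have ht2 : (2:ℝ) < t := lt_of_le_of_lt (le_max_of_le_left (le_max_right _ _)) ht
  have htT : T ≤ t := le_of_lt (lt_of_le_of_lt (le_max_of_le_left (le_max_left _ _)) ht)
  have htQ0 : ((cfQ x (N₀+1) : ℤ) : ℝ) < t := lt_of_le_of_lt (le_max_right _ _) ht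
  -- find n with q_n < t ≤ q_{n+1}
  have hex : ∃ m, t ≤ ((cfQ x (m+1) : ℤ) : ℝ) := by
    refine ⟨⌈t⌉.toNat, ?_⟩
    have h1 : ((⌈t⌉.toNat + 1 : ℕ) : ℤ) ≤ cfQ x (⌈t⌉.toNat + 1) := cfQ_ge hirr hx' _
    have h2 : t ≤ (⌈t⌉ : ℝ) := Int.le_ceil t
    have h3 : (⌈t⌉ : ℤ) ≤ (⌈t⌉.toNat : ℤ) := Int.self_le_toNat _
    have : ((⌈t⌉.toNat : ℕ) : ℝ) + 1 ≤ ((cfQ x (⌈t⌉.toNat + 1) : ℤ) : ℝ) := by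
      exact_mod_cast h1
    calc t ≤ (⌈t⌉ : ℝ) := h2
      _ ≤ ((⌈t⌉.toNat : ℕ) : ℝ) := by exact_mod_cast h3
      _ ≤ ((cfQ x (⌈t⌉.toNat + 1) : ℤ) : ℝ) := by linarith
  have hmono : Monotone (fun m => cfQ x m) :=
    monotone_nat_of_le_succ (fun m => (cfQ_pos_mono hirr hx' m).2)
  obtain ⟨n, hQt, hnN, hqnt⟩ : ∃ n : ℕ, t ≤ ((cfQ x (n+1) : ℤ) : ℝ) ∧ N₀ ≤ n ∧
      ((cfQ x n : ℤ) : ℝ) < t := by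
    classical
    refine ⟨Nat.find hex, Nat.find_spec hex, ?_, ?_⟩
    · by_contra hcon
      push_neg at hcon
      have h1 : cfQ x (Nat.find hex + 1) ≤ cfQ x (N₀+1) := hmono (by omega)
      have h2 : ((cfQ x (Nat.find hex + 1) : ℤ) : ℝ) ≤ ((cfQ x (N₀+1) : ℤ) : ℝ) := by
        exact_mod_cast h1
      have h3 := Nat.find_spec hex
      linarith
    · rcases (Nat.find hex).eq_zero_or_eq_succ_pred with h0 | hms
      · rw [h0]; show ((1:ℤ):ℝ) < t; push_cast; linarith
      · have hlt : Nat.find hex - 1 < Nat.find hex := by omega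
        have := Nat.find_min hex hlt
        push_neg at this
        have heq : Nat.find hex - 1 + 1 = Nat.find hex := by omega
        rwa [heq] at this
  -- names
  obtain ⟨hξirr, hξ0, hξ1⟩ := iter_prop hirr hx' (n+1)
  set ξ := gaussT^[n+1] x with hξdef
  have ha : 1 ≤ cfA x (n+1) := cfA_ge_one hirr hx' n
  have hb : 1 ≤ cfA x (n+2) := cfA_ge_one hirr hx' (n+1)
  have hq1 : 1 ≤ cfQ x n := (cfQ_pos_mono hirr hx' n).1
  have hQ1 : 1 ≤ cfQ x (n+1) := (cfQ_pos_mono hirr hx' (n+1)).1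
  set Q : ℝ := ((cfQ x (n+1) : ℤ) : ℝ) with hQdef
  set qn : ℝ := ((cfQ x n : ℤ) : ℝ) with hqndef
  have hqn_pos : (0:ℝ) < qn := by rw [hqndef]; exact_mod_cast hq1
  have hQ_pos : (0:ℝ) < Q := by rw [hQdef]; exact_mod_cast hQ1
  have hQT : T ≤ Q := le_trans htT hQt
  have hu1 : Q * ψ Q < 1 := hT Q hQT
  have hψQ : 0 < ψ Q := hψpos Q hQ_pos
  have hu0 : 0 < Q * ψ Q := mul_pos hQ_pos hψQ
  -- hypothesis at n+1
  have hh := hN₀ (n+1) (by omega) (by omega)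
  rw [← hQdef] at hh
  -- beta
  set r : ℝ := ∏ k ∈ Finset.range (n+1), gaussT^[k] x with hrdef
  have hr : 0 < r := Finset.prod_pos (fun k _ => (iter_prop hirr hx' k).2.1)
  have hbeta : (cfQ x n : ℝ) * x - (cfP x n : ℝ) = (-1)^n * r := beta_eq hirr hx' n
  have hbeta' : (cfQ x (n+1) : ℝ) * x - (cfP x (n+1) : ℝ) = (-1)^(n+1) * (r * ξ) := by
    rw [beta_eq hirr hx' (n+1), Finset.prod_range_succ, ← hrdef, ← hξdef]
  -- determinant identity to get Q*r + qn*(r*ξ) = 1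
  have hdet : (cfP x (n+1) : ℝ) * (cfQ x n : ℝ) - (cfP x n : ℝ) * (cfQ x (n+1) : ℝ)
      = (-1)^n := by exact_mod_cast congrArg (Int.cast : ℤ → ℝ) (cf_det (x := x) n)
  have hkey : Q * r + qn * (r * ξ) = 1 := by
    have hcomb : Q * ((cfQ x n : ℝ) * x - (cfP x n : ℝ)) -
        qn * ((cfQ x (n+1) : ℝ) * x - (cfP x (n+1) : ℝ)) = (-1)^n := by
      rw [hQdef, hqndef]; push_cast; nlinarith [hdet]
    rw [hbeta, hbeta'] at hcomb
    have hsgn : ((-1:ℝ))^n ≠ 0 := pow_ne_zero _ (by norm_num)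
    have : (-1:ℝ)^n * (Q * r + qn * (r * ξ)) = (-1)^n * 1 := by
      rw [mul_one]; rw [pow_succ] at hcomb; nlinarith [hcomb]
    exact mul_left_cancel₀ hsgn this
  -- inequalities
  set a : ℝ := ((cfA x (n+1) : ℤ) : ℝ) with hadef
  set b : ℝ := ((cfA x (n+2) : ℤ) : ℝ) with hbdef
  have ha1 : (1:ℝ) ≤ a := by rw [hadef]; exact_mod_cast ha
  have hb1 : (1:ℝ) ≤ b := by rw [hbdef]; exact_mod_cast hb
  have hQle : Q ≤ (a + 1) * qn := by
    have := cfQ_le_mul hirr hx' n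
    rw [hQdef, hqndef, hadef]
    exact_mod_cast this
  have hbx : (1:ℝ) < (b + 1) * ξ := by
    have hfl : ξ⁻¹ < ((⌊ξ⁻¹⌋ : ℤ) : ℝ) + 1 := Int.lt_floor_add_one _
    have hbeq : b = ((⌊ξ⁻¹⌋ : ℤ) : ℝ) := by rw [hbdef, cfA_eq (k := n+1)]
    have := mul_lt_mul_of_pos_right hfl hξ0
    rw [inv_mul_cancel₀ (ne_of_gt hξ0)] at this
    rw [hbeq]
    linarith [this]
  have h3 : (a + 1) * (b + 1) ≤ 4 * (a * b) := by nlinarith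
  have hu1' : (0:ℝ) < 1 - Q * ψ Q := by linarith
  have hab : 4 * (a * b) ≤ Q * ψ Q / (1 - Q * ψ Q) := by
    have : b * a ≤ Q * ψ Q / (1 - Q * ψ Q) / 4 := by
      rw [hadef, hbdef]; exact_mod_cast hh
    have h4 : 0 < Q * ψ Q / (1 - Q * ψ Q) := div_pos hu0 hu1'
    linarith
  have hab' : 4 * (a * b) * (1 - Q * ψ Q) ≤ Q * ψ Q := by
    rw [le_div_iff₀ hu1'] at hab
    exact hab
  -- chain
  have h5 : Q < 4 * (a * b) * (qn * ξ) := by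
    have e1 : Q * 1 < Q * ((b+1)*ξ) := by
      exact mul_lt_mul_of_pos_left hbx hQ_pos
    have hbξ : 0 ≤ (b+1)*ξ := mul_nonneg (by linarith) hξ0.le
    have e2 : Q * ((b+1)*ξ) ≤ ((a+1)*qn) * ((b+1)*ξ) := mul_le_mul_of_nonneg_right hQle hbξ
    have e3 : ((a+1)*qn)*((b+1)*ξ) = ((a+1)*(b+1))*(qn*ξ) := by ring
    have e4 : ((a+1)*(b+1))*(qn*ξ) ≤ 4*(a*b)*(qn*ξ) :=
      mul_le_mul_of_nonneg_right h3 (mul_nonneg hqn_pos.le hξ0.le)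
    linarith
  have h6 : Q * (1 - Q * ψ Q) < Q * ψ Q * (qn * ξ) := by nlinarith
  have h7 : Q < Q * ψ Q * (Q + qn * ξ) := by nlinarith
  have h8 : r * Q < Q * ψ Q := by nlinarith [mul_lt_mul_of_pos_left h7 hr]
  have hrψ : r < ψ Q := by
    have := (mul_lt_mul_iff_left₀ hQ_pos).mp (by linarith [h8] : r * Q < ψ Q * Q)
    exact this
  have hψt : ψ Q ≤ ψ t := hψmono t Q (by linarith) hQt
  refine ⟨cfP x n, cfQ x n, ?_, ?_, ?_⟩
  · rintro ⟨-, hq0⟩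
    omega
  · rw [hbeta, abs_mul, abs_pow, abs_neg, abs_one, one_pow, one_mul, abs_of_pos hr]
    linarith
  · rwa [abs_of_pos (show (0:ℝ) < ((cfQ x n : ℤ):ℝ) by exact_mod_cast hq1)]
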